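/- arXiv:2409.11044 — 3 statements merged into one kernel-verified Lean document; each statement's English description precedes it below -/
import Mathlib

section
/- Let H be any output of the greedy algorithm on (Γ, C), and write MIB(Γ, C) = (Γ^⊥, C^⊥). Then Γ is C(1)-consistent if and only if Supp(H) contains all the strict elements of Γ, which holds if and only if Γ^⊥ contains no strict statements. Moreover, if Γ is C(1)-consistent then H satisfies every statement in Γ. -/
open scoped NNRat

/-- A preference statement `α < β` (strict) or `α ≤ β` (non-strict). -/
structure PrefStmt (A : Type) where
  left : A
  right : A
  strict : Bool

/-- The negation of a preference statement. -/
def negStmt {A : Type} (φ : PrefStmt A) : PrefStmt A :=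
  ⟨φ.right, φ.left, !φ.strict⟩

/-- A `C(1)`-model (a list of evaluations) satisfies `α ≤ β`. -/
def satLe {A : Type} : List (A → ℚ≥0) → A → A → Prop
  | [], _, _ => True
  | c :: H, α, β => c α < c β ∨ (c α = c β ∧ satLe H α β)

/-- A `C(1)`-model (a list of evaluations) satisfies `α < β`. -/
def satLt {A : Type} : List (A → ℚ≥0) → A → A → Prop
  | [], _, _ => False
  | c :: H, α, β => c α < c β ∨ (c α = c β ∧ satLt H α β)

/-- Satisfaction of a preference statement by a `C(1)`-model. -/
def sat {A : Type} (H : List (A → ℚ≥0)) (φ : PrefStmt A) : Prop :=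
  if φ.strict then satLt H φ.left φ.right else satLe H φ.left φ.right
/-- The evaluations in `𝒞` supporting statement `φ`. -/
def SuppSet {A : Type} (𝒞 : Finset (A → ℚ≥0)) (φ : PrefStmt A) : Set (A → ℚ≥0) :=
  {c | c ∈ 𝒞 ∧ c φ.left < c φ.right}

/-- The evaluations in `𝒞` opposing statement `φ`. -/
def OppSet {A : Type} (𝒞 : Finset (A → ℚ≥0)) (φ : PrefStmt A) : Set (A → ℚ≥0) :=
  {c | c ∈ 𝒞 ∧ c φ.right < c φ.left}

/-- `(Γ', C')` is an inconsistency base for `(Γ, 𝒞)`. -/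
def InconsBase {A : Type} (𝒞 : Finset (A → ℚ≥0)) (Γ Γ' : Set (PrefStmt A))
    (C' : Set (A → ℚ≥0)) : Prop :=
  Γ' ⊆ Γ ∧ C' ⊆ (𝒞 : Set (A → ℚ≥0)) ∧
  (∀ φ ∈ Γ', SuppSet 𝒞 φ ∪ OppSet 𝒞 φ ⊆ C') ∧
  (∀ c ∈ C', ∃ φ ∈ Γ', c ∈ OppSet 𝒞 φ)

/-- First component `Γ^⊥` of the maximal inconsistency base `MIB(Γ, 𝒞)`. -/
def MIBGamma {A : Type} (𝒞 : Finset (A → ℚ≥0)) (Γ : Set (PrefStmt A)) : Set (PrefStmt A) :=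
  {φ | ∃ Γ' C', InconsBase 𝒞 Γ Γ' C' ∧ φ ∈ Γ'}

/-- Second component `C^⊥` of the maximal inconsistency base `MIB(Γ, 𝒞)`. -/
def MIBC {A : Type} (𝒞 : Finset (A → ℚ≥0)) (Γ : Set (PrefStmt A)) : Set (A → ℚ≥0) :=
  {c | ∃ Γ' C', InconsBase 𝒞 Γ Γ' C' ∧ c ∈ C'}
/-- `Opp(c)`: the statements of `Γ` opposed by evaluation `c`. -/
def OppG {A : Type} (Γ : Set (PrefStmt A)) (c : A → ℚ≥0) : Set (PrefStmt A) :=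
  {φ | φ ∈ Γ ∧ c φ.right < c φ.left}

/-- `Supp(c₁,…,c_m)`: the statements of `Γ` supported by some evaluation of the list `L`. -/
def SuppL {A : Type} (Γ : Set (PrefStmt A)) (L : List (A → ℚ≥0)) : Set (PrefStmt A) :=
  {φ | φ ∈ Γ ∧ ∃ c ∈ L, c φ.left < c φ.right}

/-- `H` is a possible output of the greedy algorithm on `(Γ, 𝒞)`. -/
def GreedyOutput {A : Type} (𝒞 : Finset (A → ℚ≥0)) (Γ : Set (PrefStmt A))
    (H : List (A → ℚ≥0)) : Prop :=
  H.Nodup ∧ (∀ c ∈ H, c ∈ 𝒞) ∧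
  (∀ i : Fin H.length, OppG Γ (H.get i) ⊆ SuppL Γ (H.take i.1)) ∧
  (∀ c ∈ 𝒞, c ∉ H → ¬ (OppG Γ c ⊆ SuppL Γ H))
/-- `H` is a `D(1)`-model: a duplicate-free list of evaluations from `D`. -/
def IsModel {A : Type} (D : Set (A → ℚ≥0)) (H : List (A → ℚ≥0)) : Prop :=
  H.Nodup ∧ ∀ c ∈ H, c ∈ D

/-- `H` is a `D(1*)`-model: a duplicate-free list whose entries are exactly `D`. -/
def IsFullModel {A : Type} (D : Set (A → ℚ≥0)) (H : List (A → ℚ≥0)) : Prop :=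
  H.Nodup ∧ ∀ c, c ∈ H ↔ c ∈ D

/-- `H` satisfies every statement in `Γ`. -/
def SatAll {A : Type} (H : List (A → ℚ≥0)) (Γ : Set (PrefStmt A)) : Prop :=
  ∀ φ ∈ Γ, sat H φ

/-- `Γ ⊨_{D(1)} φ`. -/
def Entails {A : Type} (D : Set (A → ℚ≥0)) (Γ : Set (PrefStmt A)) (φ : PrefStmt A) : Prop :=
  ∀ H, IsModel D H → SatAll H Γ → sat H φ

/-- `Γ ⊨_{D(1*)} φ`. -/
def EntailsStar {A : Type} (D : Set (A → ℚ≥0)) (Γ : Set (PrefStmt A)) (φ : PrefStmt A) : Prop :=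
  ∀ H, IsFullModel D H → SatAll H Γ → sat H φ

/-- `Γ` is strongly `D(1)`-consistent. -/
def StrongCons {A : Type} (D : Set (A → ℚ≥0)) (Γ : Set (PrefStmt A)) : Prop :=
  ∃ H, IsFullModel D H ∧ SatAll H Γ


section Aux
variable {A : Type}

lemma satLt_exists {L : List (A → ℚ≥0)} {α β : A}
    (h : satLt L α β) : ∃ c ∈ L, c α < c β := by
  induction L with
  | nil => exact h.elim
  | cons c L ih =>
    rcases h with h | ⟨_, h⟩
    · exact ⟨c, List.mem_cons_self, h⟩
    · obtain ⟨d, hd, h⟩ := ih h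
      exact ⟨d, List.mem_cons_of_mem _ hd, h⟩

lemma satLe_of_satLt {L : List (A → ℚ≥0)} {α β : A}
    (h : satLt L α β) : satLe L α β := by
  induction L with
  | nil => exact trivial
  | cons c L ih =>
    rcases h with h | ⟨h₁, h₂⟩
    · exact Or.inl h
    · exact Or.inr ⟨h₁, ih h₂⟩

lemma satLe_split {α β : A} :
    ∀ (P : List (A → ℚ≥0)) (d : A → ℚ≥0) (R : List (A → ℚ≥0)),
      satLe (P ++ d :: R) α β → d β < d α → ∃ e ∈ P, e α < e β := by
  intro P
  induction P with
  | nil =>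
    intro d R h hd
    rcases h with h | ⟨h, _⟩
    · exact absurd h (lt_asymm hd)
    · exact absurd hd (by simp [h])
  | cons e P ih =>
    intro d R h hd
    rcases h with h | ⟨he, h⟩
    · exact ⟨e, List.mem_cons_self, h⟩
    · obtain ⟨f, hf, h⟩ := ih d R h hd
      exact ⟨f, List.mem_cons_of_mem _ hf, h⟩

/-- If every opposing entry of `L` is preceded by a supporting one, then `L` satisfies
`α ≤ β`, and satisfies `α < β` iff some entry supports. -/
lemma key_sat {α β : A} :
    ∀ (L : List (A → ℚ≥0)),
      (∀ P d R, L = P ++ d :: R → d β < d α → ∃ e ∈ P, e α < e β) →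
      satLe L α β ∧ (satLt L α β ↔ ∃ c ∈ L, c α < c β) := by
  intro L
  induction L with
  | nil => intro _; exact ⟨trivial, by simp [satLt]⟩
  | cons c L ih =>
    intro hsplit
    rcases lt_trichotomy (c α) (c β) with h | h | h
    · refine ⟨Or.inl h, ⟨fun _ => ⟨c, List.mem_cons_self, h⟩, fun _ => Or.inl h⟩⟩
    · have h' : ∀ P d R, L = P ++ d :: R → d β < d α → ∃ e ∈ P, e α < e β := by
        intro P d R hL hd
        obtain ⟨e, he, hlt⟩ := hsplit (c :: P) d R (by simp [hL]) hd
        rcases List.mem_cons.mp he with rfl | he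
        · exact absurd hlt (by simp [h])
        · exact ⟨e, he, hlt⟩
      obtain ⟨h1, h2⟩ := ih h'
      refine ⟨Or.inr ⟨h, h1⟩, ?_⟩
      constructor
      · intro hlt
        rcases hlt with hlt | ⟨_, hlt⟩
        · exact absurd hlt (by simp [h])
        · obtain ⟨d, hd, hd'⟩ := h2.mp hlt
          exact ⟨d, List.mem_cons_of_mem _ hd, hd'⟩
      · rintro ⟨d, hd, hd'⟩
        rcases List.mem_cons.mp hd with rfl | hd
        · exact absurd hd' (by simp [h])
        · exact Or.inr ⟨h, h2.mpr ⟨d, hd, hd'⟩⟩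
    · obtain ⟨e, he, _⟩ := hsplit [] c L rfl h
      simp at he

/-- Splitting property for greedy outputs. -/
lemma greedy_split {𝒞 : Finset (A → ℚ≥0)} {Γ : Set (PrefStmt A)}
    {H : List (A → ℚ≥0)} (hgo : GreedyOutput 𝒞 Γ H) {φ : PrefStmt A} (hφ : φ ∈ Γ) :
    ∀ P d R, H = P ++ d :: R → d φ.right < d φ.left →
      ∃ e ∈ P, e φ.left < e φ.right := by
  intro P d R hH hd
  have hlen : P.length < H.length := by simp [hH]
  have hget : H.get ⟨P.length, hlen⟩ = d := by
    simp [hH, List.getElem_append_right (le_refl P.length)]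
  have hopp : φ ∈ OppG Γ (H.get ⟨P.length, hlen⟩) := by
    rw [hget]; exact ⟨hφ, hd⟩
  have := hgo.2.2.1 ⟨P.length, hlen⟩ hopp
  rw [show H.take P.length = P by rw [hH]; exact List.take_left] at this
  exact this.2

lemma greedy_satLe {𝒞 : Finset (A → ℚ≥0)} {Γ : Set (PrefStmt A)}
    {H : List (A → ℚ≥0)} (hgo : GreedyOutput 𝒞 Γ H) {φ : PrefStmt A} (hφ : φ ∈ Γ) :
    satLe H φ.left φ.right :=
  (key_sat H (greedy_split hgo hφ)).1

lemma greedy_satLt_iff {𝒞 : Finset (A → ℚ≥0)} {Γ : Set (PrefStmt A)}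
    {H : List (A → ℚ≥0)} (hgo : GreedyOutput 𝒞 Γ H) {φ : PrefStmt A} (hφ : φ ∈ Γ) :
    satLt H φ.left φ.right ↔ φ ∈ SuppL Γ H := by
  rw [(key_sat H (greedy_split hgo hφ)).2]
  exact ⟨fun h => ⟨hφ, h⟩, fun h => h.2⟩

/-- Support transfer: the support of any model of `Γ` is contained in the greedy output's. -/
lemma supp_transfer {𝒞 : Finset (A → ℚ≥0)} {Γ : Set (PrefStmt A)}
    {H : List (A → ℚ≥0)} (hgo : GreedyOutput 𝒞 Γ H)
    {H' : List (A → ℚ≥0)} (hc : ∀ c ∈ H', c ∈ 𝒞) (hsat : SatAll H' Γ) :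
    ∀ (R P : List (A → ℚ≥0)), P ++ R = H' → SuppL Γ P ⊆ SuppL Γ H →
      SuppL Γ (P ++ R) ⊆ SuppL Γ H := by
  intro R
  induction R with
  | nil => intro P hPR hP; simpa using hP
  | cons d R' ih =>
    intro P hPR hP
    -- first show d ∈ H
    have hdC : d ∈ 𝒞 := hc d (by rw [← hPR]; simp)
    have hopp : OppG Γ d ⊆ SuppL Γ H := by
      rintro χ ⟨hχΓ, hχd⟩
      have hsχ := hsat χ hχΓ
      have hle : satLe H' χ.left χ.right := by
        unfold sat at hsχ
        split at hsχ
        · exact satLe_of_satLt hsχ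
        · exact hsχ
      rw [← hPR] at hle
      obtain ⟨e, he, hlt⟩ := satLe_split P d R' hle hχd
      exact hP ⟨hχΓ, e, he, hlt⟩
    have hdH : d ∈ H := by
      by_contra hdH
      exact hgo.2.2.2 d hdC hdH hopp
    have hP' : SuppL Γ (P ++ [d]) ⊆ SuppL Γ H := by
      rintro χ ⟨hχΓ, e, he, hlt⟩
      rcases List.mem_append.mp he with he | he
      · exact hP ⟨hχΓ, e, he, hlt⟩
      · rcases List.mem_singleton.mp he with rfl
        exact ⟨hχΓ, e, hdH, hlt⟩
    have := ih (P ++ [d]) (by simpa using hPR) hP'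
    simpa using this

/-- No entry of the greedy output lies in the `C'` component of an inconsistency base. -/
lemma greedy_disjoint_base {𝒞 : Finset (A → ℚ≥0)} {Γ Γ' : Set (PrefStmt A)}
    {C' : Set (A → ℚ≥0)} {H : List (A → ℚ≥0)} (hgo : GreedyOutput 𝒞 Γ H)
    (hib : InconsBase 𝒞 Γ Γ' C') :
    ∀ (R P : List (A → ℚ≥0)), P ++ R = H → (∀ e ∈ P, e ∉ C') → ∀ c ∈ R, c ∉ C' := by
  intro R
  induction R with
  | nil => intro P _ _ c hc; simp at hc
  | cons d R' ih =>
    intro P hPR hPn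
    have hdn : d ∉ C' := by
      intro hd
      obtain ⟨φ, hφΓ', hφopp⟩ := hib.2.2.2 d hd
      obtain ⟨e, he, hlt⟩ := greedy_split hgo (hib.1 hφΓ') P d R' hPR.symm hφopp.2
      have heC : e ∈ 𝒞 := hgo.2.1 e (by rw [← hPR]; exact List.mem_append_left _ he)
      exact hPn e he (hib.2.2.1 φ hφΓ' (Or.inl ⟨heC, hlt⟩))
    intro c hc
    rcases List.mem_cons.mp hc with rfl | hc
    · exact hdn
    · refine ih (P ++ [d]) (by simpa using hPR) ?_ c hc
      intro e he
      rcases List.mem_append.mp he with he | he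
      · exact hPn e he
      · rcases List.mem_singleton.mp he with rfl
        exact hdn

end Aux

/-- For any output `H` of the greedy algorithm: `Γ` is `C(1)`-consistent iff `Supp(H)` contains
all the strict elements of `Γ`, which holds iff `Γ^⊥` contains no strict statements; moreover,
if `Γ` is `C(1)`-consistent then `H` satisfies `Γ`. -/
theorem stmt_9 {A : Type} [Fintype A] (𝒞 : Finset (A → ℚ≥0)) (Γ : Set (PrefStmt A))
    (H : List (A → ℚ≥0)) (hgo : GreedyOutput 𝒞 Γ H) :
    ((∃ H' : List (A → ℚ≥0), IsModel (𝒞 : Set (A → ℚ≥0)) H' ∧ SatAll H' Γ) ↔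
      (∀ φ ∈ Γ, φ.strict = true → φ ∈ SuppL Γ H)) ∧
    ((∀ φ ∈ Γ, φ.strict = true → φ ∈ SuppL Γ H) ↔
      (∀ φ ∈ MIBGamma 𝒞 Γ, φ.strict = false)) ∧
    ((∃ H' : List (A → ℚ≥0), IsModel (𝒞 : Set (A → ℚ≥0)) H' ∧ SatAll H' Γ) → SatAll H Γ) := by
  have hsatH : (∀ φ ∈ Γ, φ.strict = true → φ ∈ SuppL Γ H) → SatAll H Γ := by
    intro hstrict φ hφ
    unfold sat
    split
    case isTrue hs => exact (greedy_satLt_iff hgo hφ).mpr (hstrict φ hφ hs)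
    case isFalse hs => exact greedy_satLe hgo hφ
  have hfwd : (∃ H' : List (A → ℚ≥0), IsModel (𝒞 : Set (A → ℚ≥0)) H' ∧ SatAll H' Γ) →
      (∀ φ ∈ Γ, φ.strict = true → φ ∈ SuppL Γ H) := by
    rintro ⟨H', ⟨_, hmem⟩, hsat⟩ φ hφ hs
    have hsφ := hsat φ hφ
    unfold sat at hsφ
    rw [hs] at hsφ; simp at hsφ
    obtain ⟨c, hc, hlt⟩ := satLt_exists hsφ
    have : φ ∈ SuppL Γ H' := ⟨hφ, c, hc, hlt⟩
    have := supp_transfer hgo hmem hsat H' [] rfl (by rintro χ ⟨_, e, he, _⟩; simp at he)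
    exact this (by simpa using ‹φ ∈ SuppL Γ H'›)
  have hbwd : (∀ φ ∈ Γ, φ.strict = true → φ ∈ SuppL Γ H) →
      (∃ H' : List (A → ℚ≥0), IsModel (𝒞 : Set (A → ℚ≥0)) H' ∧ SatAll H' Γ) := by
    intro h
    exact ⟨H, ⟨hgo.1, fun c hc => hgo.2.1 c hc⟩, hsatH h⟩
  refine ⟨⟨hfwd, hbwd⟩, ⟨?_, ?_⟩, fun h => hsatH (hfwd h)⟩
  · -- strict support → MIB has no strict statements
    intro hstrict φ hφ
    obtain ⟨Γ', C', hib, hφΓ'⟩ := hφ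
    by_contra hs
    have hs : φ.strict = true := by simpa using hs
    have hφΓ : φ ∈ Γ := hib.1 hφΓ'
    obtain ⟨_, c, hcH, hlt⟩ := hstrict φ hφΓ hs
    have hcC : c ∈ 𝒞 := hgo.2.1 c hcH
    have hcC' : c ∈ C' := hib.2.2.1 φ hφΓ' (Or.inl ⟨hcC, hlt⟩)
    exact greedy_disjoint_base hgo hib H [] rfl (by simp) c hcH hcC'
  · -- MIB has no strict statements → strict support
    intro hmib φ hφ hs
    by_contra hns
    -- build an inconsistency base containing φ
    set Γ' : Set (PrefStmt A) := {ψ | ψ ∈ Γ ∧ ψ ∉ SuppL Γ H} with hΓ'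
    set C' : Set (A → ℚ≥0) := {c | c ∈ 𝒞 ∧ ∃ ψ ∈ Γ', c ∈ OppSet 𝒞 ψ} with hC'
    have hib : InconsBase 𝒞 Γ Γ' C' := by
      refine ⟨fun ψ hψ => hψ.1, fun c hc => hc.1, ?_, fun c hc => hc.2⟩
      intro ψ hψ c hc
      rcases hc with ⟨hcC, hlt⟩ | ⟨hcC, hlt⟩
      · -- c supports ψ, so c ∉ H
        have hcH : c ∉ H := fun hcH => hψ.2 ⟨hψ.1, c, hcH, hlt⟩
        have := hgo.2.2.2 c hcC hcH
        rw [Set.not_subset] at this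
        obtain ⟨χ, ⟨hχΓ, hχopp⟩, hχns⟩ := this
        exact ⟨hcC, χ, ⟨hχΓ, hχns⟩, hcC, hχopp⟩
      · exact ⟨hcC, ψ, hψ, hcC, hlt⟩
    have : φ ∈ MIBGamma 𝒞 Γ := ⟨Γ', C', hib, hφ, hns⟩
    have := hmib φ this
    simp [hs] at this
end

section
/- Suppose Γ is strongly C(1)-consistent. Then for all alternatives α, β: Γ ⊨_{C(1*)} α < β if and only if Γ ⊨_{C(1)} α ≤ β and there exists some c ∈ C with c(α) ≠ c(β). -/
open scoped NNRat

lemma satLt_length_le {A : Type} {H : List (A → ℚ≥0)} {α β : A} (h : satLt H α β) :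
    ∃ c ∈ H, c α ≠ c β := by
  induction H with
  | nil => exact absurd h (by simp [satLt])
  | cons c H ih =>
    rcases h with h | ⟨he, h⟩
    · exact ⟨c, by simp, ne_of_lt h⟩
    · obtain ⟨d, hd, hne⟩ := ih h
      exact ⟨d, by simp [hd], hne⟩

lemma satLe_of_all_eq {A : Type} {H : List (A → ℚ≥0)} {α β : A}
    (h : ∀ c ∈ H, c α = c β) : satLe H α β := by
  induction H with
  | nil => trivial
  | cons c H ih =>
    exact Or.inr ⟨h c (by simp), ih fun d hd => h d (by simp [hd])⟩

lemma satLe_iff_or {A : Type} {H : List (A → ℚ≥0)} {α β : A} :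
    satLe H α β ↔ satLt H α β ∨ ∀ c ∈ H, c α = c β := by
  induction H with
  | nil => simp [satLe, satLt]
  | cons c H ih =>
    simp only [satLe, satLt, ih, List.forall_mem_cons]
    tauto

lemma satLt_of_satLe_ne {A : Type} {H : List (A → ℚ≥0)} {α β : A}
    (h : satLe H α β) (hne : ∃ c ∈ H, c α ≠ c β) : satLt H α β := by
  rcases satLe_iff_or.mp h with h' | h'
  · exact h'
  · obtain ⟨c, hc, hne⟩ := hne
    exact absurd (h' c hc) hne

lemma satLe_append {A : Type} {H L : List (A → ℚ≥0)} {α β : A} :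
    satLe (H ++ L) α β ↔ satLt H α β ∨ ((∀ c ∈ H, c α = c β) ∧ satLe L α β) := by
  induction H with
  | nil => simp [satLt]
  | cons c H ih =>
    simp only [List.cons_append, satLe, satLt, ih, List.forall_mem_cons]
    tauto

lemma satLt_append {A : Type} {H L : List (A → ℚ≥0)} {α β : A} :
    satLt (H ++ L) α β ↔ satLt H α β ∨ ((∀ c ∈ H, c α = c β) ∧ satLt L α β) := by
  induction H with
  | nil => simp [satLt]
  | cons c H ih =>
    simp only [List.cons_append, satLt, ih, List.forall_mem_cons]
    tauto

lemma satLt_filter {A : Type} {H : List (A → ℚ≥0)} {α β : A} (p : (A → ℚ≥0) → Bool)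
    (h : satLt H α β) (heq : ∀ c ∈ H, p c = false → c α = c β) :
    satLt (H.filter p) α β := by
  induction H with
  | nil => exact absurd h (by simp [satLt])
  | cons c H ih =>
    by_cases hp : p c = true
    · rw [List.filter_cons_of_pos hp]
      rcases h with h | ⟨he, h⟩
      · exact Or.inl h
      · exact Or.inr ⟨he, ih h fun d hd => heq d (by simp [hd])⟩
    · rw [List.filter_cons_of_neg hp]
      rcases h with h | ⟨he, h⟩
      · exact absurd (heq c (by simp) (by simpa using hp)) (ne_of_lt h)
      · exact ih h fun d hd => heq d (by simp [hd])

/-- If `Γ` is strongly `C(1)`-consistent, then `Γ ⊨_{C(1*)} α < β` iff `Γ ⊨_{C(1)} α ≤ β` and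
`α` and `β` differ on some element of `𝒞`. -/
theorem stmt_15 {A : Type} [Fintype A] (𝒞 : Finset (A → ℚ≥0)) (Γ : Set (PrefStmt A))
    (h : StrongCons (𝒞 : Set (A → ℚ≥0)) Γ) (α β : A) :
    EntailsStar (𝒞 : Set (A → ℚ≥0)) Γ ⟨α, β, true⟩ ↔
      (Entails (𝒞 : Set (A → ℚ≥0)) Γ ⟨α, β, false⟩ ∧ ∃ c ∈ 𝒞, c α ≠ c β) := by
  classical
  obtain ⟨H₀, ⟨hnd₀, hmem₀⟩, hsat₀⟩ := h
  constructor
  · intro hes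
    constructor
    · -- Entails nonstrict
      rintro H ⟨hnd, hsub⟩ hΓ
      -- extend H to a full model
      set L := H₀.filter (fun c => decide (c ∉ H)) with hL
      have hLmem : ∀ c ∈ L, c ∈ H₀ ∧ c ∉ H := by
        intro c hc
        rw [hL, List.mem_filter] at hc
        exact ⟨hc.1, by simpa using hc.2⟩
      have hfull : IsFullModel (𝒞 : Set (A → ℚ≥0)) (H ++ L) := by
        constructor
        · refine List.Nodup.append hnd (List.Nodup.filter _ hnd₀) ?_
          intro a ha haL
          exact (hLmem a haL).2 ha
        · intro c
          constructor
          · intro hc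
            rcases List.mem_append.mp hc with hc | hc
            · exact hsub c hc
            · exact ((hmem₀ c).mp (hLmem c hc).1)
          · intro hc
            by_cases hcH : c ∈ H
            · exact List.mem_append.mpr (Or.inl hcH)
            · refine List.mem_append.mpr (Or.inr ?_)
              rw [hL, List.mem_filter]
              exact ⟨(hmem₀ c).mpr hc, by simpa using hcH⟩
      have hsatΓ : SatAll (H ++ L) Γ := by
        intro φ hφ
        have h1 := hΓ φ hφ
        have h2 := hsat₀ φ hφ
        cases hb : φ.strict
        · simp only [sat, hb, if_false] at h1 h2 ⊢
          rcases satLe_iff_or.mp h1 with h1 | h1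
          · exact satLe_append.mpr (Or.inl h1)
          · refine satLe_append.mpr (Or.inr ⟨h1, ?_⟩)
            rcases satLe_iff_or.mp h2 with h2 | h2
            · refine satLe_iff_or.mpr (Or.inl ?_)
              refine satLt_filter _ h2 ?_
              intro c _ hc
              have : c ∈ H := by simpa using hc
              exact h1 c this
            · exact satLe_of_all_eq fun c hc => h2 c (hLmem c hc).1
        · simp only [sat, hb, if_true] at h1 ⊢
          exact satLt_append.mpr (Or.inl h1)
      have := hes (H ++ L) hfull hsatΓ
      simp only [sat, if_true] at this ⊢
      rcases satLt_append.mp this with h' | h'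
      · exact satLe_iff_or.mpr (Or.inl h')
      · exact satLe_of_all_eq h'.1
    · -- existence of differing c
      have := hes H₀ ⟨hnd₀, hmem₀⟩ hsat₀
      simp only [sat, if_true] at this
      obtain ⟨c, hc, hne⟩ := satLt_length_le this
      exact ⟨c, by exact_mod_cast (hmem₀ c).mp hc, hne⟩
  · rintro ⟨hent, c, hc, hne⟩ H hfull hΓ
    have hle := hent H ⟨hfull.1, fun d hd => (hfull.2 d).mp hd⟩ hΓ
    simp only [sat, if_false] at hle
    simp only [sat, if_true]
    exact satLt_of_satLe_ne hle ⟨c, (hfull.2 c).mpr (by exact_mod_cast hc), hne⟩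
end

section
/- Write MIB(Γ, C) = (Γ^⊥, C^⊥) and suppose C^⊥ = ∅. Then Γ is not strongly C(1)-consistent if and only if there exists a strict statement φ ∈ Γ such that all evaluations agree on its alternatives, i.e., c(α_φ) = c(β_φ) for all c ∈ C. -/
open scoped NNRat

lemma satLt_imp_Le {A : Type} (H : List (A → ℚ≥0)) (α β : A) : satLt H α β → satLe H α β := by
  induction H with
  | nil => simp [satLt, satLe]
  | cons c H ih =>
    intro h
    rcases h with h | ⟨h1, h2⟩
    · exact Or.inl h
    · exact Or.inr ⟨h1, ih h2⟩

lemma not_satLt_of_agree {A : Type} (H : List (A → ℚ≥0)) (α β : A)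
    (h : ∀ c ∈ H, c α = c β) : ¬ satLt H α β := by
  induction H with
  | nil => simp [satLt]
  | cons c H ih =>
    intro hlt
    rcases hlt with hlt | ⟨_, hlt⟩
    · exact absurd (h c List.mem_cons_self) (ne_of_lt hlt)
    · exact ih (fun d hd => h d (List.mem_cons_of_mem _ hd)) hlt

lemma main_order {A : Type} (𝒞 : Finset (A → ℚ≥0)) (Γ : Set (PrefStmt A))
    (hC : MIBC 𝒞 Γ = ∅) :
    ∀ S : Finset (A → ℚ≥0), S ⊆ 𝒞 → ∃ L : List (A → ℚ≥0), L.Nodup ∧ (∀ c, c ∈ L ↔ c ∈ S) ∧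
      ∀ φ ∈ Γ, (SuppSet 𝒞 φ ∪ OppSet 𝒞 φ) ⊆ ↑S →
        satLe L φ.left φ.right ∧
          ((SuppSet 𝒞 φ ∪ OppSet 𝒞 φ).Nonempty → satLt L φ.left φ.right) := by
  classical
  intro S
  induction S using Finset.strongInduction with
  | _ S ih =>
    intro hS
    rcases S.eq_empty_or_nonempty with rfl | hne
    · refine ⟨[], List.nodup_nil, by simp, fun φ hφ hsub => ⟨trivial, ?_⟩⟩
      rintro ⟨c, hc⟩
      simpa using hsub hc
    · have hgood : ∃ c ∈ S, ∀ φ ∈ Γ, (SuppSet 𝒞 φ ∪ OppSet 𝒞 φ) ⊆ ↑S → c ∉ OppSet 𝒞 φ := by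
        by_contra h
        push_neg at h
        obtain ⟨c0, hc0⟩ := hne
        have hmem : c0 ∈ MIBC 𝒞 Γ := by
          refine ⟨{φ | φ ∈ Γ ∧ (SuppSet 𝒞 φ ∪ OppSet 𝒞 φ) ⊆ ↑S}, ↑S,
            ⟨fun φ hφ => hφ.1, fun c hc => hS hc, fun φ hφ => hφ.2, ?_⟩, hc0⟩
          intro c hc
          obtain ⟨φ, hφΓ, hsub, hopp⟩ := h c hc
          exact ⟨φ, ⟨hφΓ, hsub⟩, hopp⟩
        rw [hC] at hmem
        exact hmem
      obtain ⟨c, hcS, hcgood⟩ := hgood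
      obtain ⟨L, hnd, hmemL, hsat⟩ :=
        ih (S.erase c) (Finset.erase_ssubset hcS) ((Finset.erase_subset _ _).trans hS)
      refine ⟨c :: L, ?_, ?_, ?_⟩
      · refine List.nodup_cons.mpr ⟨fun hcl => ?_, hnd⟩
        have := (hmemL c).mp hcl
        simp at this
      · intro d
        simp only [List.mem_cons, hmemL, Finset.mem_erase]
        constructor
        · rintro (rfl | ⟨_, hd⟩)
          · exact hcS
          · exact hd
        · intro hd
          by_cases hdc : d = c
          · exact Or.inl hdc
          · exact Or.inr ⟨hdc, hd⟩
      · intro φ hφ hsub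
        by_cases hc : c ∈ SuppSet 𝒞 φ ∪ OppSet 𝒞 φ
        · have hsupp : c ∈ SuppSet 𝒞 φ := by
            rcases hc with h | h
            · exact h
            · exact absurd h (hcgood φ hφ hsub)
          exact ⟨Or.inl hsupp.2, fun _ => Or.inl hsupp.2⟩
        · have hc𝒞 : c ∈ 𝒞 := hS hcS
          have heq : c φ.left = c φ.right := by
            by_contra hne'
            rcases lt_or_gt_of_ne hne' with h | h
            · exact hc (Or.inl ⟨hc𝒞, h⟩)
            · exact hc (Or.inr ⟨hc𝒞, h⟩)
          have hsub' : SuppSet 𝒞 φ ∪ OppSet 𝒞 φ ⊆ ↑(S.erase c) := by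
            intro d hd
            simp only [Finset.coe_erase, Set.mem_diff, Set.mem_singleton_iff]
            exact ⟨hsub hd, fun hdc => hc (hdc ▸ hd)⟩
          obtain ⟨h1, h2⟩ := hsat φ hφ hsub'
          exact ⟨Or.inr ⟨heq, h1⟩, fun hn => Or.inr ⟨heq, h2 hn⟩⟩

/-- If `C^⊥ = ∅`, then `Γ` is not strongly `C(1)`-consistent iff `Γ` contains a strict
statement on whose alternatives all evaluations agree. -/
theorem stmt_17 {A : Type} [Fintype A] (𝒞 : Finset (A → ℚ≥0)) (Γ : Set (PrefStmt A))
    (hC : MIBC 𝒞 Γ = ∅) :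
    ¬ StrongCons (𝒞 : Set (A → ℚ≥0)) Γ ↔
      ∃ φ ∈ Γ, φ.strict = true ∧ ∀ c ∈ 𝒞, c φ.left = c φ.right := by
  constructor
  · intro hns
    by_contra hno
    push_neg at hno
    obtain ⟨L, hnd, hmemL, hsat⟩ := main_order 𝒞 Γ hC 𝒞 (le_refl _)
    apply hns
    refine ⟨L, ⟨hnd, fun c => by simpa using hmemL c⟩, ?_⟩
    intro φ hφ
    have hsub : (SuppSet 𝒞 φ ∪ OppSet 𝒞 φ) ⊆ ↑𝒞 := by
      rintro d (hd | hd)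
      · exact hd.1
      · exact hd.1
    obtain ⟨h1, h2⟩ := hsat φ hφ hsub
    unfold sat
    by_cases hstr : φ.strict
    · simp only [hstr, if_true]
      apply h2
      obtain ⟨c, hc𝒞, hcne⟩ := hno φ hφ hstr
      rcases lt_or_gt_of_ne hcne with h | h
      · exact ⟨c, Or.inl ⟨hc𝒞, h⟩⟩
      · exact ⟨c, Or.inr ⟨hc𝒞, h⟩⟩
    · simp only [hstr, if_false]
      exact h1
  · rintro ⟨φ, hφΓ, hstr, hagree⟩ ⟨H, ⟨_, hHmem⟩, hsatall⟩
    have := hsatall φ hφΓ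
    unfold sat at this
    rw [hstr] at this
    simp only [if_true] at this
    exact not_satLt_of_agree H φ.left φ.right
      (fun c hc => hagree c (by exact_mod_cast (hHmem c).mp hc)) this
end
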